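/- Let f : F_2^n → F_2^n be an and-net and let C be a cycle of its global interaction graph G(f). Then C is local (i.e., C is a cycle of the local interaction graph G(f)(x) for some x ∈ F_2^n) if and only if C has no delocalizing triple in G(f). -/

import Mathlib

/-- States of a Boolean network on `n` components: `F_2^n`. -/
abbrev St (n : ℕ) := Fin n → ZMod 2

/-- The unit vector `e^i`. -/
def uv {n : ℕ} (i : Fin n) : St n := fun j => if j = i then 1 else 0

/-- There is an edge from `j` to `i` in the local interaction graph `G(f)(x)`,
i.e. `∂_j f_i (x) = 1`. -/
def hasEdge {n : ℕ} (f : St n → St n) (x : St n) (j i : Fin n) : Prop :=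
  f (x + uv j) i ≠ f x i

/-- `(j,i)` is a positive edge of `G(f)(x)`. -/
def edgePos {n : ℕ} (f : St n → St n) (x : St n) (j i : Fin n) : Prop :=
  hasEdge f x j i ∧ x j = f x i

/-- `(j,i)` is a negative edge of `G(f)(x)`. -/
def edgeNeg {n : ℕ} (f : St n → St n) (x : St n) (j i : Fin n) : Prop :=
  hasEdge f x j i ∧ x j ≠ f x i

/-- The local interaction graph `G(f)(x)` has a negative (elementary, directed) cycle:
a cyclic sequence of pairwise distinct vertices, each consecutive pair being an edge of
`G(f)(x)`, with an odd number of negative edges. -/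
def hasNegCycleAt {n : ℕ} (f : St n → St n) (x : St n) : Prop :=
  ∃ (m : ℕ) (v : Fin (m + 1) → Fin n), Function.Injective v ∧
    (∀ k, hasEdge f x (v k) (v (k + 1))) ∧
    Odd (Nat.card {k : Fin (m + 1) // edgeNeg f x (v k) (v (k + 1))})

/-- `f` is an and-net: each coordinate function is a product of literals. -/
def IsAndNet {n : ℕ} (f : St n → St n) : Prop :=
  ∀ i : Fin n, ∃ P N : Finset (Fin n), Disjoint P N ∧
    ∀ x : St n, f x i = (∏ j ∈ P, x j) * ∏ j ∈ N, (x j + 1)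

/-- `(j,i)` is a positive edge of the global interaction graph `G(f)`. -/
def gEdgePos {n : ℕ} (f : St n → St n) (j i : Fin n) : Prop := ∃ x, edgePos f x j i

/-- `(j,i)` is a negative edge of the global interaction graph `G(f)`. -/
def gEdgeNeg {n : ℕ} (f : St n → St n) (j i : Fin n) : Prop := ∃ x, edgeNeg f x j i

/-- `(j,i)` is an edge of the global interaction graph `G(f)`. -/
def gEdge {n : ℕ} (f : St n → St n) (j i : Fin n) : Prop := gEdgePos f j i ∨ gEdgeNeg f j i

/-- `a` is a vertex of the cycle described by `v`. -/
def CycVertex {n m : ℕ} (v : Fin (m + 1) → Fin n) (a : Fin n) : Prop := ∃ k, v k = a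

/-- `(a, b)` is an edge of the cycle described by `v`. -/
def CycEdge {n m : ℕ} (v : Fin (m + 1) → Fin n) (a b : Fin n) : Prop :=
  ∃ k, v k = a ∧ v (k + 1) = b

/-- `(i, j, k)` is a delocalizing triple of the cycle `v` in `G(f)`: `j, k` are distinct
vertices of the cycle, and `(i,j)`, `(i,k)` are edges of `G(f)` which are not edges of
the cycle and have different signs. -/
def DelocTriple {n : ℕ} (f : St n → St n) {m : ℕ} (v : Fin (m + 1) → Fin n)
    (i j k : Fin n) : Prop :=
  CycVertex v j ∧ CycVertex v k ∧ j ≠ k ∧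
  ¬ CycEdge v i j ∧ ¬ CycEdge v i k ∧
  ((gEdgePos f i j ∧ gEdgeNeg f i k) ∨ (gEdgeNeg f i j ∧ gEdgePos f i k))

/-- For an and-net `f`, a cycle `C` of the global interaction graph `G(f)` (given by an
injective `v` whose consecutive pairs are edges of `G(f)`) is local (i.e. all its edges
lie in `G(f)(x)` for some single `x`) if and only if it has no delocalizing triple. -/
theorem stmt_15 (n : ℕ) (f : St n → St n) (hand : IsAndNet f)
    (m : ℕ) (v : Fin (m + 1) → Fin n) (hinj : Function.Injective v)
    (hedges : ∀ k, gEdge f (v k) (v (k + 1))) :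
    (∃ x : St n, ∀ k, hasEdge f x (v k) (v (k + 1))) ↔
      ¬ ∃ i j k : Fin n, DelocTriple f v i j k := by
  classical
  choose P N hdisj hprod using hand
  -- ZMod 2 helper facts
  have z01 : ∀ a : ZMod 2, a = 0 ∨ a = 1 := by decide
  have zne : ∀ a : ZMod 2, a ≠ 0 ↔ a = 1 := by decide
  have z0 : ∀ a : ZMod 2, a + 1 ≠ 0 ↔ a = 0 := by decide
  have za1 : ∀ a : ZMod 2, a + 1 = 1 ↔ a = 0 := by decide
  have zb : ∀ a : ZMod 2, a + 1 = 0 ↔ a = 1 := by decide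
  have zone0 : (1 : ZMod 2) ≠ 0 := by decide
  have huv : ∀ (x : St n) (j l : Fin n), (x + uv j) l = if l = j then x l + 1 else x l := by
    intro x j l
    simp only [Pi.add_apply, uv]
    split <;> simp
  have hone : ∀ (x : St n) (i : Fin n),
      f x i = 1 ↔ ((∀ l ∈ P i, x l = 1) ∧ ∀ l ∈ N i, x l = 0) := by
    intro x i
    rw [← zne, hprod i x, mul_ne_zero_iff, Finset.prod_ne_zero_iff, Finset.prod_ne_zero_iff]
    constructor
    · rintro ⟨h1, h2⟩
      exact ⟨fun l hl => (zne _).mp (h1 l hl), fun l hl => (z0 _).mp (h2 l hl)⟩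
    · rintro ⟨h1, h2⟩
      exact ⟨fun l hl => (zne _).mpr (h1 l hl), fun l hl => (z0 _).mpr (h2 l hl)⟩
  have iffhelper : ∀ (a b c : ZMod 2) (S : Prop), (b = 1 ↔ (c = 1 ∧ S)) →
      (a = 1 ↔ (c = 0 ∧ S)) → (a ≠ b ↔ S) := by
    intro a b c S h1 h2
    constructor
    · intro hne
      rcases z01 a with ha | ha <;> rcases z01 b with hb | hb
      · exact absurd (ha.trans hb.symm) hne
      · exact (h1.mp hb).2
      · exact (h2.mp ha).2
      · exact absurd (ha.trans hb.symm) hne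
    · intro hS
      rcases z01 c with hc | hc
      · have ha : a = 1 := h2.mpr ⟨hc, hS⟩
        have hb : b ≠ 1 := fun h => zone0 (((h1.mp h).1).symm.trans hc)
        exact fun h => hb (h.symm.trans ha)
      · have hb : b = 1 := h1.mpr ⟨hc, hS⟩
        have ha : a ≠ 1 := fun h => zone0 (hc.symm.trans ((h2.mp h).1))
        exact fun h => ha (h.trans hb)
  -- Key characterization of local edges
  have key : ∀ (x : St n) (j i : Fin n), hasEdge f x j i ↔
      (j ∈ P i ∪ N i ∧ (∀ l ∈ P i, l ≠ j → x l = 1) ∧ (∀ l ∈ N i, l ≠ j → x l = 0)) := by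
    intro x j i
    by_cases hjP : j ∈ P i
    · have hjN : j ∉ N i := fun h => (Finset.disjoint_left.mp (hdisj i)) hjP h
      have h1 : f x i = 1 ↔ (x j = 1 ∧ ((∀ l ∈ P i, l ≠ j → x l = 1) ∧
          (∀ l ∈ N i, l ≠ j → x l = 0))) := by
        rw [hone]
        constructor
        · rintro ⟨hp, hn⟩
          exact ⟨hp j hjP, fun l hl _ => hp l hl, fun l hl _ => hn l hl⟩
        · rintro ⟨hxj, hp, hn⟩
          refine ⟨fun l hl => ?_, fun l hl => hn l hl (fun h => hjN (h ▸ hl))⟩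
          by_cases h : l = j
          · exact h ▸ hxj
          · exact hp l hl h
      have h2 : f (x + uv j) i = 1 ↔ (x j = 0 ∧ ((∀ l ∈ P i, l ≠ j → x l = 1) ∧
          (∀ l ∈ N i, l ≠ j → x l = 0))) := by
        rw [hone]
        constructor
        · rintro ⟨hp, hn⟩
          refine ⟨?_, fun l hl hne => ?_, fun l hl hne => ?_⟩
          · have := hp j hjP
            rw [huv, if_pos rfl] at this
            exact (za1 _).mp this
          · have := hp l hl
            rwa [huv, if_neg hne] at this
          · have := hn l hl
            rwa [huv, if_neg hne] at this
        · rintro ⟨hxj, hp, hn⟩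
          constructor
          · intro l hl
            rw [huv]
            by_cases h : l = j
            · rw [if_pos h, h, hxj]; decide
            · rw [if_neg h]; exact hp l hl h
          · intro l hl
            rw [huv, if_neg (fun h : l = j => hjN (h ▸ hl))]
            exact hn l hl (fun h => hjN (h ▸ hl))
      constructor
      · intro h
        exact ⟨Finset.mem_union_left _ hjP,
          (iffhelper _ _ (x j) _ h1 h2).mp h⟩
      · rintro ⟨_, hS⟩
        exact (iffhelper _ _ (x j) _ h1 h2).mpr hS
    · by_cases hjN : j ∈ N i
      · have hjP' : j ∉ P i := hjP
        have h1 : f x i = 1 ↔ (x j = 0 ∧ ((∀ l ∈ P i, l ≠ j → x l = 1) ∧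
            (∀ l ∈ N i, l ≠ j → x l = 0))) := by
          rw [hone]
          constructor
          · rintro ⟨hp, hn⟩
            exact ⟨hn j hjN, fun l hl _ => hp l hl, fun l hl _ => hn l hl⟩
          · rintro ⟨hxj, hp, hn⟩
            refine ⟨fun l hl => hp l hl (fun h => hjP' (h ▸ hl)), fun l hl => ?_⟩
            by_cases h : l = j
            · exact h ▸ hxj
            · exact hn l hl h
        have h2 : f (x + uv j) i = 1 ↔ (x j = 1 ∧ ((∀ l ∈ P i, l ≠ j → x l = 1) ∧
            (∀ l ∈ N i, l ≠ j → x l = 0))) := by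
          rw [hone]
          constructor
          · rintro ⟨hp, hn⟩
            refine ⟨?_, fun l hl hne => ?_, fun l hl hne => ?_⟩
            · have := hn j hjN
              rw [huv, if_pos rfl] at this
              exact (zb _).mp this
            · have := hp l hl
              rwa [huv, if_neg hne] at this
            · have := hn l hl
              rwa [huv, if_neg hne] at this
          · rintro ⟨hxj, hp, hn⟩
            constructor
            · intro l hl
              rw [huv, if_neg (fun h : l = j => hjP' (h ▸ hl))]
              exact hp l hl (fun h => hjP' (h ▸ hl))
            · intro l hl
              rw [huv]
              by_cases h : l = j
              · rw [if_pos h, h, hxj]; decide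
              · rw [if_neg h]; exact hn l hl h
        have hmain : f x i ≠ f (x + uv j) i ↔ _ := iffhelper _ _ (x j) _ h2 h1
        constructor
        · intro h
          exact ⟨Finset.mem_union_right _ hjN, hmain.mp (Ne.symm h)⟩
        · rintro ⟨_, hS⟩
          exact Ne.symm (hmain.mpr hS)
      · have heq : f (x + uv j) i = f x i := by
          rw [hprod i, hprod i]
          congr 1
          · refine Finset.prod_congr rfl fun l hl => ?_
            rw [huv, if_neg (fun h : l = j => hjP (h ▸ hl))]
          · refine Finset.prod_congr rfl fun l hl => ?_
            rw [huv, if_neg (fun h : l = j => hjN (h ▸ hl))]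
        constructor
        · intro h
          exact absurd heq h
        · rintro ⟨hmem, -⟩
          rcases Finset.mem_union.mp hmem with h | h
          · exact absurd h hjP
          · exact absurd h hjN
  -- Global edge signs
  have hpos : ∀ j i, gEdgePos f j i ↔ j ∈ P i := by
    intro j i
    constructor
    · rintro ⟨x, he, hs⟩
      obtain ⟨hmem, hSP, hSN⟩ := (key x j i).mp he
      rcases Finset.mem_union.mp hmem with h | h
      · exact h
      · exfalso
        rcases z01 (f x i) with hf | hf
        · -- f x i = 0, so x j = 0, but then f x i = 1
          have hxj : x j = 0 := hs.trans hf
          have : f x i = 1 := (hone x i).mpr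
            ⟨fun l hl => hSP l hl (fun hh => (Finset.disjoint_left.mp (hdisj i)) hl (hh ▸ h)),
             fun l hl => by
              by_cases hlj : l = j
              · exact hlj ▸ hxj
              · exact hSN l hl hlj⟩
          exact zone0 (this.symm.trans hf)
        · have := ((hone x i).mp hf).2 j h
          rw [hs, hf] at this
          exact zone0 this
    · intro h
      refine ⟨fun l => if l ∈ P i then 1 else 0, ?_, ?_⟩
      · apply (key _ j i).mpr
        refine ⟨Finset.mem_union_left _ h, fun l hl _ => if_pos hl, fun l hl _ => ?_⟩
        exact if_neg (fun hh => (Finset.disjoint_left.mp (hdisj i)) hh hl)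
      · show (if j ∈ P i then (1 : ZMod 2) else 0) =
          f (fun l => if l ∈ P i then (1 : ZMod 2) else 0) i
        rw [if_pos h]
        exact ((hone (fun l => if l ∈ P i then (1 : ZMod 2) else 0) i).mpr
          ⟨fun l hl => if_pos hl,
           fun l hl => if_neg (fun hh => (Finset.disjoint_left.mp (hdisj i)) hh hl)⟩).symm
  have hneg : ∀ j i, gEdgeNeg f j i ↔ j ∈ N i := by
    intro j i
    constructor
    · rintro ⟨x, he, hs⟩
      obtain ⟨hmem, hSP, hSN⟩ := (key x j i).mp he
      rcases Finset.mem_union.mp hmem with h | h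
      · exfalso
        rcases z01 (f x i) with hf | hf
        · -- f x i = 0, so x j = 1 or 0; x j ≠ f x i means x j = 1; then f x i = 1
          have hxj : x j = 1 := by
            rcases z01 (x j) with h' | h'
            · exact absurd (h'.trans hf.symm) hs
            · exact h'
          have : f x i = 1 := (hone x i).mpr
            ⟨fun l hl => by
              by_cases hlj : l = j
              · exact hlj ▸ hxj
              · exact hSP l hl hlj,
             fun l hl => hSN l hl (fun hh => (Finset.disjoint_left.mp (hdisj i)) h (hh ▸ hl))⟩
          exact zone0 (this.symm.trans hf)
        · have := ((hone x i).mp hf).1 j h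
          rw [← hf] at this
          exact hs this
      · exact h
    · intro h
      have hjP : j ∉ P i := fun hh => (Finset.disjoint_left.mp (hdisj i)) hh h
      refine ⟨fun l => if l ∈ P i then 1 else 0, ?_, ?_⟩
      · apply (key _ j i).mpr
        refine ⟨Finset.mem_union_right _ h, fun l hl _ => if_pos hl, fun l hl _ => ?_⟩
        exact if_neg (fun hh => (Finset.disjoint_left.mp (hdisj i)) hh hl)
      · show (if j ∈ P i then (1 : ZMod 2) else 0) ≠
          f (fun l => if l ∈ P i then (1 : ZMod 2) else 0) i
        have hf1 : f (fun l => if l ∈ P i then (1 : ZMod 2) else 0) i = 1 :=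
          (hone (fun l => if l ∈ P i then (1 : ZMod 2) else 0) i).mpr
            ⟨fun l hl => if_pos hl,
             fun l hl => if_neg (fun hh => (Finset.disjoint_left.mp (hdisj i)) hh hl)⟩
        rw [if_neg hjP, hf1]
        decide
  -- cycle edge characterization
  have hce : ∀ (a : Fin (m + 1)) (i : Fin n), CycEdge v i (v (a + 1)) ↔ i = v a := by
    intro a i
    constructor
    · rintro ⟨k, hk1, hk2⟩
      have hk : k = a := add_right_cancel (hinj hk2)
      rw [← hk1, hk]
    · rintro rfl
      exact ⟨a, rfl, rfl⟩
  constructor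
  · rintro ⟨x, hx⟩ ⟨i, j, k, hj, hk, hjk, hnj, hnk, hsg⟩
    have main : ∀ (j' : Fin n), CycVertex v j' → ¬ CycEdge v i j' →
        (i ∈ P j' → x i = 1) ∧ (i ∈ N j' → x i = 0) := by
      rintro j' ⟨a, rfl⟩ hnc
      have ha' : a - 1 + 1 = a := by exact sub_add_cancel a 1
      have he := hx (a - 1)
      rw [ha'] at he
      obtain ⟨hmem, hSP, hSN⟩ := (key x (v (a - 1)) (v a)).mp he
      have hine : i ≠ v (a - 1) := fun h => hnc (by
        have := (hce (a - 1) i).mpr h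
        rwa [ha'] at this)
      exact ⟨fun h => hSP i h hine, fun h => hSN i h hine⟩
    rcases hsg with ⟨hp, hn⟩ | ⟨hn, hp⟩
    · have h1 : x i = 1 := (main j hj hnj).1 ((hpos i j).mp hp)
      have h0 : x i = 0 := (main k hk hnk).2 ((hneg i k).mp hn)
      exact zone0 (h1.symm.trans h0)
    · have h1 : x i = 1 := (main k hk hnk).1 ((hpos i k).mp hp)
      have h0 : x i = 0 := (main j hj hnj).2 ((hneg i j).mp hn)
      exact zone0 (h1.symm.trans h0)
  · intro hno
    refine ⟨fun l => if ∃ c : Fin (m + 1), l ∈ P (v (c + 1)) ∧ l ≠ v c then 1 else 0,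
      fun k => ?_⟩
    apply (key _ _ _).mpr
    refine ⟨?_, fun l hl hne => if_pos ⟨k, hl, hne⟩, fun l hl hne => ?_⟩
    · rcases hedges k with h | h
      · exact Finset.mem_union_left _ ((hpos _ _).mp h)
      · exact Finset.mem_union_right _ ((hneg _ _).mp h)
    · rw [if_neg]
      rintro ⟨c, hlc, hnec⟩
      apply hno
      refine ⟨l, v (c + 1), v (k + 1), ⟨c + 1, rfl⟩, ⟨k + 1, rfl⟩, ?_,
        fun h => hnec ((hce c l).mp h), fun h => hne ((hce k l).mp h),
        Or.inl ⟨(hpos _ _).mpr hlc, (hneg _ _).mpr hl⟩⟩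
      intro h
      have hck : c = k := add_right_cancel (hinj h)
      rw [hck] at hlc
      exact (Finset.disjoint_left.mp (hdisj (v (k + 1)))) hlc hl
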